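/- Negation-reduction is confluent: if a →¬* b and a →¬* c then there exists d with b →¬* d and c →¬* d. -/

import Mathlib

/-- Expressions of the system d. -/
inductive Expr : Type
  | tau : Expr
  | var : ℕ → Expr
  | uabs : ℕ → Expr → Expr → Expr   -- [x:a]b
  | app : Expr → Expr → Expr        -- (a b)
  | eabs : ℕ → Expr → Expr → Expr   -- [x!a]b
  | pdef : ℕ → Expr → Expr → Expr → Expr -- [x ≐ a, b : c], binds x in c only
  | projL : Expr → Expr             -- a.1
  | projR : Expr → Expr             -- a.2
  | prod : Expr → Expr → Expr       -- [a,b]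
  | sum : Expr → Expr → Expr        -- [a+b]
  | injl : Expr → Expr → Expr       -- left injection
  | injr : Expr → Expr → Expr       -- right injection
  | case : Expr → Expr → Expr       -- [a|b]
  | neg : Expr → Expr               -- ¬a
deriving DecidableEq

namespace Expr

/-- Free variables. -/
def FV : Expr → Finset ℕ
  | tau => ∅
  | var x => {x}
  | uabs x a b => FV a ∪ (FV b \ {x})
  | app a b => FV a ∪ FV b
  | eabs x a b => FV a ∪ (FV b \ {x})
  | pdef x a b c => FV a ∪ FV b ∪ (FV c \ {x})
  | projL a => FV a
  | projR a => FV a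
  | prod a b => FV a ∪ FV b
  | sum a b => FV a ∪ FV b
  | injl a b => FV a ∪ FV b
  | injr a b => FV a ∪ FV b
  | case a b => FV a ∪ FV b
  | neg a => FV a

/-- Substitution of all free occurrences of a variable. -/
def subst : Expr → ℕ → Expr → Expr
  | tau, _, _ => tau
  | var y, x, b => if y = x then b else var y
  | uabs y a c, x, b =>
      if y = x then uabs y (subst a x b) c else uabs y (subst a x b) (subst c x b)
  | app a c, x, b => app (subst a x b) (subst c x b)
  | eabs y a c, x, b =>
      if y = x then eabs y (subst a x b) c else eabs y (subst a x b) (subst c x b)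
  | pdef y a c d, x, b =>
      if y = x then pdef y (subst a x b) (subst c x b) d
      else pdef y (subst a x b) (subst c x b) (subst d x b)
  | projL a, x, b => projL (subst a x b)
  | projR a, x, b => projR (subst a x b)
  | prod a c, x, b => prod (subst a x b) (subst c x b)
  | sum a c, x, b => sum (subst a x b) (subst c x b)
  | injl a c, x, b => injl (subst a x b) (subst c x b)
  | injr a c, x, b => injr (subst a x b) (subst c x b)
  | case a c, x, b => case (subst a x b) (subst c x b)
  | neg a, x, b => neg (subst a x b)

/-- Single-step reduction of system d. -/
inductive Step : Expr → Expr → Prop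
  | beta1 (x a b c) : Step (app (uabs x a b) c) (subst b x c)
  | beta2 (x a b c) : Step (app (eabs x a b) c) (subst b x c)
  | beta3 (a b c d) : Step (app (case a b) (injl c d)) (app a c)
  | beta4 (a b c d) : Step (app (case a b) (injr c d)) (app b d)
  | pi1 (x a b c) : Step (projL (pdef x a b c)) a
  | pi2 (x a b c) : Step (projR (pdef x a b c)) b
  | pi3 (a b) : Step (projL (prod a b)) a
  | pi4 (a b) : Step (projR (prod a b)) b
  | pi5 (a b) : Step (projL (sum a b)) a
  | pi6 (a b) : Step (projR (sum a b)) b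
  | nu1 (a) : Step (neg (neg a)) a
  | nu2 (a b) : Step (neg (prod a b)) (sum (neg a) (neg b))
  | nu3 (a b) : Step (neg (sum a b)) (prod (neg a) (neg b))
  | nu4 (x a b) : Step (neg (uabs x a b)) (eabs x a (neg b))
  | nu5 (x a b) : Step (neg (eabs x a b)) (uabs x a (neg b))
  | nu6 : Step (neg tau) tau
  | nu7 (x a b c) : Step (neg (pdef x a b c)) (pdef x a b c)
  | nu8 (a b) : Step (neg (injl a b)) (injl a b)
  | nu9 (a b) : Step (neg (injr a b)) (injr a b)
  | nu10 (a b) : Step (neg (case a b)) (case a b)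
  | uabsL {a b : Expr} (x) (c) : Step a b → Step (uabs x a c) (uabs x b c)
  | uabsR {a b : Expr} (x) (c) : Step a b → Step (uabs x c a) (uabs x c b)
  | appL {a b : Expr} (c) : Step a b → Step (app a c) (app b c)
  | appR {a b : Expr} (c) : Step a b → Step (app c a) (app c b)
  | eabsL {a b : Expr} (x) (c) : Step a b → Step (eabs x a c) (eabs x b c)
  | eabsR {a b : Expr} (x) (c) : Step a b → Step (eabs x c a) (eabs x c b)
  | pdef1 {a b : Expr} (x) (c d) : Step a b → Step (pdef x a c d) (pdef x b c d)
  | pdef2 {a b : Expr} (x) (c d) : Step a b → Step (pdef x c a d) (pdef x c b d)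
  | pdef3 {a b : Expr} (x) (c d) : Step a b → Step (pdef x c d a) (pdef x c d b)
  | projL1 {a b : Expr} : Step a b → Step (projL a) (projL b)
  | projR1 {a b : Expr} : Step a b → Step (projR a) (projR b)
  | prodL {a b : Expr} (c) : Step a b → Step (prod a c) (prod b c)
  | prodR {a b : Expr} (c) : Step a b → Step (prod c a) (prod c b)
  | sumL {a b : Expr} (c) : Step a b → Step (sum a c) (sum b c)
  | sumR {a b : Expr} (c) : Step a b → Step (sum c a) (sum c b)
  | injlL {a b : Expr} (c) : Step a b → Step (injl a c) (injl b c)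
  | injlR {a b : Expr} (c) : Step a b → Step (injl c a) (injl c b)
  | injrL {a b : Expr} (c) : Step a b → Step (injr a c) (injr b c)
  | injrR {a b : Expr} (c) : Step a b → Step (injr c a) (injr c b)
  | caseL {a b : Expr} (c) : Step a b → Step (case a c) (case b c)
  | caseR {a b : Expr} (c) : Step a b → Step (case c a) (case c b)
  | negC {a b : Expr} : Step a b → Step (neg a) (neg b)

/-- Reduction: reflexive-transitive closure of single-step reduction. -/
def Red : Expr → Expr → Prop := Relation.ReflTransGen Step

/-- Congruence =λ : the symmetric and transitive (and reflexive) closure of reduction. -/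
def Conv : Expr → Expr → Prop := Relation.EqvGen Step

/-- Single-step negation-reduction. -/
inductive NegStep : Expr → Expr → Prop
  | nu1 (a) : NegStep (neg (neg a)) a
  | nu2 (a b) : NegStep (neg (prod a b)) (sum (neg a) (neg b))
  | nu3 (a b) : NegStep (neg (sum a b)) (prod (neg a) (neg b))
  | nu4 (x a b) : NegStep (neg (uabs x a b)) (eabs x a (neg b))
  | nu5 (x a b) : NegStep (neg (eabs x a b)) (uabs x a (neg b))
  | prodL {a b : Expr} (c) : NegStep a b → NegStep (prod a c) (prod b c)
  | prodR {a b : Expr} (c) : NegStep a b → NegStep (prod c a) (prod c b)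
  | sumL {a b : Expr} (c) : NegStep a b → NegStep (sum a c) (sum b c)
  | sumR {a b : Expr} (c) : NegStep a b → NegStep (sum c a) (sum c b)
  | uabsBody {a b : Expr} (x) (c) : NegStep a b → NegStep (uabs x c a) (uabs x c b)
  | eabsBody {a b : Expr} (x) (c) : NegStep a b → NegStep (eabs x c a) (eabs x c b)
  | negC {a b : Expr} : NegStep a b → NegStep (neg a) (neg b)

/-- Negation-reduction: reflexive-transitive closure. -/
def NegRed : Expr → Expr → Prop := Relation.ReflTransGen NegStep

end Expr

open Expr

/-- Contexts: lists of declarations, most recent first. -/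
abbrev Ctx := List (ℕ × Expr)

/-- Domain of a context. -/
def Ctx.dom (Γ : Ctx) : List ℕ := Γ.map Prod.fst

/-- Substitution applied to all types declared in a context. -/
def Ctx.subst (Γ : Ctx) (x : ℕ) (b : Expr) : Ctx :=
  Γ.map (fun p => (p.1, Expr.subst p.2 x b))

/-- The typing relation of system d. -/
inductive Typing : Ctx → Expr → Expr → Prop
  | ax : Typing [] .tau .tau
  | start {Γ a b} (x) : Typing Γ a b → x ∉ Ctx.dom Γ →
      Typing ((x, a) :: Γ) (.var x) a
  | weak {Γ a b c d} (x) : Typing Γ a b → Typing Γ c d → x ∉ Ctx.dom Γ →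
      Typing ((x, c) :: Γ) a b
  | conv {Γ a b c d} : Typing Γ a b → Conv b c → Typing Γ c d → Typing Γ a c
  | absU {Γ a b c} (x) : Typing ((x, a) :: Γ) b c →
      Typing Γ (.uabs x a b) (.uabs x a c)
  | absE {Γ a b c} (x) : Typing ((x, a) :: Γ) b c →
      Typing Γ (.eabs x a b) (.uabs x a c)
  | appl {Γ a b c d} (x) : Typing Γ a (.uabs x b c) → Typing Γ d b →
      Typing Γ (.app a d) (Expr.subst c x d)
  | pdef {Γ a b c d e} (x) : Typing Γ a b → Typing Γ c (Expr.subst d x a) →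
      Typing ((x, b) :: Γ) d e → Typing Γ (.pdef x a c d) (.eabs x b d)
  | chI {Γ a b c} (x) : Typing Γ a (.eabs x b c) → Typing Γ (.projL a) b
  | chB {Γ a b c} (x) : Typing Γ a (.eabs x b c) →
      Typing Γ (.projR a) (Expr.subst c x (.projL a))
  | prd {Γ a b c d} : Typing Γ a c → Typing Γ b d →
      Typing Γ (.prod a b) (.prod c d)
  | sum {Γ a b c d} : Typing Γ a c → Typing Γ b d →
      Typing Γ (.sum a b) (.prod c d)
  | prL {Γ a b c} : Typing Γ a (.prod b c) → Typing Γ (.projL a) b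
  | prR {Γ a b c} : Typing Γ a (.prod b c) → Typing Γ (.projR a) c
  | injL {Γ a b c d} : Typing Γ a b → Typing Γ c d →
      Typing Γ (.injl a c) (.sum b c)
  | injR {Γ a b c d} : Typing Γ a b → Typing Γ c d →
      Typing Γ (.injr c a) (.sum c b)
  | case {Γ a b c₁ c₂ d e} (x y z) : Typing Γ a (.uabs x c₁ d) →
      Typing Γ b (.uabs y c₂ d) → Typing Γ d e → z ∉ FV d →
      Typing Γ (.case a b) (.uabs z (.sum c₁ c₂) d)
  | neg {Γ a b} : Typing Γ a b → Typing Γ (.neg a) b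

/-- Validity: an expression is valid under a context iff it has a type. -/
def Valid (Γ : Ctx) (a : Expr) : Prop := ∃ b, Typing Γ a b

/-- The norming relation: `Norming Γ a n` holds iff the partial norming function
ν_Γ(a) is defined with value the norm `n` (norms are built from τ and products). -/
inductive Norming : Ctx → Expr → Expr → Prop
  | tau (Γ) : Norming Γ .tau .tau
  | varHead {Γ b n} (x) : Norming Γ b n → Norming ((x, b) :: Γ) (.var x) n
  | varTail {Γ b n} (x y) : x ≠ y → Norming Γ (.var x) n →
      Norming ((y, b) :: Γ) (.var x) n
  | uabs {Γ a b na nb} (x) : Norming Γ a na → Norming ((x, a) :: Γ) b nb →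
      Norming Γ (.uabs x a b) (.prod na nb)
  | eabs {Γ a b na nb} (x) : Norming Γ a na → Norming ((x, a) :: Γ) b nb →
      Norming Γ (.eabs x a b) (.prod na nb)
  | app {Γ a b nb nc} : Norming Γ a (.prod nb nc) → Norming Γ b nb →
      Norming Γ (.app a b) nc
  | pdef {Γ a b c na nb} (x) : Norming Γ a na → Norming Γ b nb →
      Norming ((x, a) :: Γ) c nb → Norming Γ (.pdef x a b c) (.prod na nb)
  | prod {Γ a b na nb} : Norming Γ a na → Norming Γ b nb →
      Norming Γ (.prod a b) (.prod na nb)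
  | sum {Γ a b na nb} : Norming Γ a na → Norming Γ b nb →
      Norming Γ (.sum a b) (.prod na nb)
  | injl {Γ a b na nb} : Norming Γ a na → Norming Γ b nb →
      Norming Γ (.injl a b) (.prod na nb)
  | injr {Γ a b na nb} : Norming Γ a na → Norming Γ b nb →
      Norming Γ (.injr a b) (.prod na nb)
  | projL {Γ a na nb} : Norming Γ a (.prod na nb) → Norming Γ (.projL a) na
  | projR {Γ a na nb} : Norming Γ a (.prod na nb) → Norming Γ (.projR a) nb
  | case {Γ a b na nb nc} : Norming Γ a (.prod na nc) → Norming Γ b (.prod nb nc) →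
      Norming Γ (.case a b) (.prod (.prod na nb) nc)
  | neg {Γ a n} : Norming Γ a n → Norming Γ (.neg a) n

/-- Normability: ν_Γ(a) is defined. -/
def Normable (Γ : Ctx) (a : Expr) : Prop := ∃ n, Norming Γ a n


namespace Expr

local infix:50 " →¬* " => NegRed

/-- Weight measure showing termination of negation-reduction. -/
def wt : Expr → ℕ
  | tau => 1
  | var _ => 1
  | uabs _ a b => wt a + wt b + 1
  | app a b => wt a + wt b + 1
  | eabs _ a b => wt a + wt b + 1
  | pdef _ a b c => wt a + wt b + wt c + 1
  | projL a => wt a + 1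
  | projR a => wt a + 1
  | prod a b => wt a + wt b + 1
  | sum a b => wt a + wt b + 1
  | injl a b => wt a + wt b + 1
  | injr a b => wt a + wt b + 1
  | case a b => wt a + wt b + 1
  | neg a => 2 * wt a

lemma wt_pos (a : Expr) : 1 ≤ wt a := by
  induction a <;> simp [wt] <;> omega

lemma NegStep.wt_lt {a b : Expr} (h : NegStep a b) : wt b < wt a := by
  induction h with
  | nu1 a => have := wt_pos a; simp [wt]; omega
  | nu2 a b => simp [wt]; omega
  | nu3 a b => simp [wt]; omega
  | nu4 x a b => simp [wt]; omega
  | nu5 x a b => simp [wt]; omega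
  | prodL c h ih => simp [wt]; omega
  | prodR c h ih => simp [wt]; omega
  | sumL c h ih => simp [wt]; omega
  | sumR c h ih => simp [wt]; omega
  | uabsBody x c h ih => simp [wt]; omega
  | eabsBody x c h ih => simp [wt]; omega
  | negC h ih => simp [wt]; omega

namespace NegRed

lemma single {a b : Expr} (h : NegStep a b) : NegRed a b :=
  Relation.ReflTransGen.single h

lemma refl {a : Expr} : NegRed a a := Relation.ReflTransGen.refl

lemma trans {a b c : Expr} (h1 : NegRed a b) (h2 : NegRed b c) : NegRed a c :=
  Relation.ReflTransGen.trans h1 h2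

lemma neg {a b : Expr} (h : NegRed a b) : NegRed (.neg a) (.neg b) :=
  Relation.ReflTransGen.lift Expr.neg (fun _ _ h => NegStep.negC h) _ _ h

lemma prodL {a b : Expr} (c : Expr) (h : NegRed a b) :
    NegRed (.prod a c) (.prod b c) :=
  Relation.ReflTransGen.lift (fun x => Expr.prod x c)
    (fun _ _ h => NegStep.prodL c h) _ _ h

lemma prodR {a b : Expr} (c : Expr) (h : NegRed a b) :
    NegRed (.prod c a) (.prod c b) :=
  Relation.ReflTransGen.lift (fun x => Expr.prod c x)
    (fun _ _ h => NegStep.prodR c h) _ _ h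

lemma sumL {a b : Expr} (c : Expr) (h : NegRed a b) :
    NegRed (.sum a c) (.sum b c) :=
  Relation.ReflTransGen.lift (fun x => Expr.sum x c)
    (fun _ _ h => NegStep.sumL c h) _ _ h

lemma sumR {a b : Expr} (c : Expr) (h : NegRed a b) :
    NegRed (.sum c a) (.sum c b) :=
  Relation.ReflTransGen.lift (fun x => Expr.sum c x)
    (fun _ _ h => NegStep.sumR c h) _ _ h

lemma uabsBody {a b : Expr} (x : ℕ) (c : Expr) (h : NegRed a b) :
    NegRed (.uabs x c a) (.uabs x c b) :=
  Relation.ReflTransGen.lift (fun y => Expr.uabs x c y)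
    (fun _ _ h => NegStep.uabsBody x c h) _ _ h

lemma eabsBody {a b : Expr} (x : ℕ) (c : Expr) (h : NegRed a b) :
    NegRed (.eabs x c a) (.eabs x c b) :=
  Relation.ReflTransGen.lift (fun y => Expr.eabs x c y)
    (fun _ _ h => NegStep.eabsBody x c h) _ _ h

end NegRed

/-- Key inversion lemma for steps out of a negation: if ¬w steps to v,
then ¬v and w join. -/
lemma negStep_inv {w v : Expr} (h : NegStep (.neg w) v) :
    ∃ d, NegRed (.neg v) d ∧ NegRed w d := by
  cases h with
  | nu1 a =>
    exact ⟨_, NegRed.refl, NegRed.refl⟩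
  | nu2 a b =>
    refine ⟨.prod a b, ?_, NegRed.refl⟩
    exact ((NegRed.single (NegStep.nu3 _ _)).trans
      (NegRed.prodL _ (NegRed.single (NegStep.nu1 a)))).trans
      (NegRed.prodR _ (NegRed.single (NegStep.nu1 b)))
  | nu3 a b =>
    refine ⟨.sum a b, ?_, NegRed.refl⟩
    exact ((NegRed.single (NegStep.nu2 _ _)).trans
      (NegRed.sumL _ (NegRed.single (NegStep.nu1 a)))).trans
      (NegRed.sumR _ (NegRed.single (NegStep.nu1 b)))
  | nu4 x a b =>
    refine ⟨.uabs x a b, ?_, NegRed.refl⟩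
    exact (NegRed.single (NegStep.nu5 _ _ _)).trans
      (NegRed.uabsBody _ _ (NegRed.single (NegStep.nu1 b)))
  | nu5 x a b =>
    refine ⟨.eabs x a b, ?_, NegRed.refl⟩
    exact (NegRed.single (NegStep.nu4 _ _ _)).trans
      (NegRed.eabsBody _ _ (NegRed.single (NegStep.nu1 b)))
  | negC h' =>
    exact ⟨_, NegRed.single (NegStep.nu1 _), NegRed.single h'⟩

/-- Local confluence of single-step negation-reduction. -/
lemma negStep_locally_confluent {a b c : Expr} (hb : NegStep a b)
    (hc : NegStep a c) : ∃ d, NegRed b d ∧ NegRed c d := by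
  induction hb generalizing c with
  | nu1 w =>
    cases hc with
    | nu1 => exact ⟨w, NegRed.refl, NegRed.refl⟩
    | negC h2 =>
      obtain ⟨d, hd1, hd2⟩ := negStep_inv h2
      exact ⟨d, hd2, hd1⟩
  | nu2 p q =>
    cases hc with
    | nu2 => exact ⟨_, NegRed.refl, NegRed.refl⟩
    | negC h2 =>
      cases h2 with
      | prodL _ h' =>
        exact ⟨.sum (.neg _) (.neg q),
          NegRed.sumL _ (NegRed.neg (NegRed.single h')),
          NegRed.single (NegStep.nu2 _ _)⟩
      | prodR _ h' =>
        exact ⟨.sum (.neg p) (.neg _),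
          NegRed.sumR _ (NegRed.neg (NegRed.single h')),
          NegRed.single (NegStep.nu2 _ _)⟩
  | nu3 p q =>
    cases hc with
    | nu3 => exact ⟨_, NegRed.refl, NegRed.refl⟩
    | negC h2 =>
      cases h2 with
      | sumL _ h' =>
        exact ⟨.prod (.neg _) (.neg q),
          NegRed.prodL _ (NegRed.neg (NegRed.single h')),
          NegRed.single (NegStep.nu3 _ _)⟩
      | sumR _ h' =>
        exact ⟨.prod (.neg p) (.neg _),
          NegRed.prodR _ (NegRed.neg (NegRed.single h')),
          NegRed.single (NegStep.nu3 _ _)⟩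
  | nu4 x p q =>
    cases hc with
    | nu4 => exact ⟨_, NegRed.refl, NegRed.refl⟩
    | negC h2 =>
      cases h2 with
      | uabsBody _ _ h' =>
        exact ⟨.eabs x p (.neg _),
          NegRed.eabsBody _ _ (NegRed.neg (NegRed.single h')),
          NegRed.single (NegStep.nu4 _ _ _)⟩
  | nu5 x p q =>
    cases hc with
    | nu5 => exact ⟨_, NegRed.refl, NegRed.refl⟩
    | negC h2 =>
      cases h2 with
      | eabsBody _ _ h' =>
        exact ⟨.uabs x p (.neg _),
          NegRed.uabsBody _ _ (NegRed.neg (NegRed.single h')),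
          NegRed.single (NegStep.nu5 _ _ _)⟩
  | prodL v h ih =>
    cases hc with
    | prodL _ h2 =>
      obtain ⟨d, hd1, hd2⟩ := ih h2
      exact ⟨.prod d v, NegRed.prodL _ hd1, NegRed.prodL _ hd2⟩
    | prodR _ h2 =>
      exact ⟨.prod _ _, NegRed.prodR _ (NegRed.single h2),
        NegRed.prodL _ (NegRed.single h)⟩
  | prodR v h ih =>
    cases hc with
    | prodR _ h2 =>
      obtain ⟨d, hd1, hd2⟩ := ih h2
      exact ⟨.prod v d, NegRed.prodR _ hd1, NegRed.prodR _ hd2⟩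
    | prodL _ h2 =>
      exact ⟨.prod _ _, NegRed.prodL _ (NegRed.single h2),
        NegRed.prodR _ (NegRed.single h)⟩
  | sumL v h ih =>
    cases hc with
    | sumL _ h2 =>
      obtain ⟨d, hd1, hd2⟩ := ih h2
      exact ⟨.sum d v, NegRed.sumL _ hd1, NegRed.sumL _ hd2⟩
    | sumR _ h2 =>
      exact ⟨.sum _ _, NegRed.sumR _ (NegRed.single h2),
        NegRed.sumL _ (NegRed.single h)⟩
  | sumR v h ih =>
    cases hc with
    | sumR _ h2 =>
      obtain ⟨d, hd1, hd2⟩ := ih h2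
      exact ⟨.sum v d, NegRed.sumR _ hd1, NegRed.sumR _ hd2⟩
    | sumL _ h2 =>
      exact ⟨.sum _ _, NegRed.sumL _ (NegRed.single h2),
        NegRed.sumR _ (NegRed.single h)⟩
  | uabsBody x v h ih =>
    cases hc with
    | uabsBody _ _ h2 =>
      obtain ⟨d, hd1, hd2⟩ := ih h2
      exact ⟨.uabs x v d, NegRed.uabsBody _ _ hd1, NegRed.uabsBody _ _ hd2⟩
  | eabsBody x v h ih =>
    cases hc with
    | eabsBody _ _ h2 =>
      obtain ⟨d, hd1, hd2⟩ := ih h2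
      exact ⟨.eabs x v d, NegRed.eabsBody _ _ hd1, NegRed.eabsBody _ _ hd2⟩
  | @negC u u' h ih =>
    cases hc with
    | negC h2 =>
      obtain ⟨d, hd1, hd2⟩ := ih h2
      exact ⟨.neg d, NegRed.neg hd1, NegRed.neg hd2⟩
    | nu1 w =>
      obtain ⟨d, hd1, hd2⟩ := negStep_inv h
      exact ⟨d, hd1, hd2⟩
    | nu2 p q =>
      cases h with
      | prodL _ h' =>
        exact ⟨.sum (.neg _) (.neg q), NegRed.single (NegStep.nu2 _ _),
          NegRed.sumL _ (NegRed.neg (NegRed.single h'))⟩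
      | prodR _ h' =>
        exact ⟨.sum (.neg p) (.neg _), NegRed.single (NegStep.nu2 _ _),
          NegRed.sumR _ (NegRed.neg (NegRed.single h'))⟩
    | nu3 p q =>
      cases h with
      | sumL _ h' =>
        exact ⟨.prod (.neg _) (.neg q), NegRed.single (NegStep.nu3 _ _),
          NegRed.prodL _ (NegRed.neg (NegRed.single h'))⟩
      | sumR _ h' =>
        exact ⟨.prod (.neg p) (.neg _), NegRed.single (NegStep.nu3 _ _),
          NegRed.prodR _ (NegRed.neg (NegRed.single h'))⟩
    | nu4 x p q =>
      cases h with
      | uabsBody _ _ h' =>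
        exact ⟨.eabs x p (.neg _), NegRed.single (NegStep.nu4 _ _ _),
          NegRed.eabsBody _ _ (NegRed.neg (NegRed.single h'))⟩
    | nu5 x p q =>
      cases h with
      | eabsBody _ _ h' =>
        exact ⟨.uabs x p (.neg _), NegRed.single (NegStep.nu5 _ _ _),
          NegRed.uabsBody _ _ (NegRed.neg (NegRed.single h'))⟩

/-- Newman's lemma instance: confluence of negation-reduction. -/
lemma negRed_conf_aux : ∀ n (a : Expr), wt a ≤ n → ∀ b c, NegRed a b →
    NegRed a c → ∃ d, NegRed b d ∧ NegRed c d := by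
  intro n
  induction n with
  | zero => intro a ha; have := wt_pos a; omega
  | succ n ih =>
    intro a ha b c hb hc
    rcases Relation.ReflTransGen.cases_head hb with rfl | ⟨b1, hab1, hb1b⟩
    · exact ⟨c, hc, Relation.ReflTransGen.refl⟩
    rcases Relation.ReflTransGen.cases_head hc with rfl | ⟨c1, hac1, hc1c⟩
    · exact ⟨b, Relation.ReflTransGen.refl, hb⟩
    obtain ⟨e, he1, he2⟩ := negStep_locally_confluent hab1 hac1
    have hb1 : wt b1 ≤ n := by have := hab1.wt_lt; omega
    have hc1 : wt c1 ≤ n := by have := hac1.wt_lt; omega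
    obtain ⟨f, hf1, hf2⟩ := ih b1 hb1 b e hb1b he1
    obtain ⟨g, hg1, hg2⟩ := ih c1 hc1 c f hc1c (he2.trans hf2)
    exact ⟨g, hf1.trans hg2, hg1⟩

end Expr

theorem stmt_5 (a b c : Expr) (hb : Expr.NegRed a b) (hc : Expr.NegRed a c) :
    ∃ d, Expr.NegRed b d ∧ Expr.NegRed c d :=
  Expr.negRed_conf_aux (Expr.wt a) a le_rfl b c hb hc
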